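/- Let M be a finite loopless rank-4 hypermodular matroid, and let F and L be flats of M with r(F) ≥ r(L). Then the pair {F, L} is non-modular if and only if F ∩ L = ∅ and either (r(F) = 3 and r(L) = 2) or (r(F) = r(L) = 2 and r(F∪L) = 3). -/

import Mathlib

open Set Matroid
open scoped Matroid

namespace SMC

variable {α : Type*}

/-- The rank of a set `X` in a matroid `M`: the maximum cardinality of an
independent subset of `X` (intended for finite matroids). -/
noncomputable def rk (M : Matroid α) (X : Set α) : ℕ :=
  sSup {n | ∃ I, M.Indep I ∧ I ⊆ X ∧ I.ncard = n}

/-- The rank of a matroid: the rank of its ground set. -/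
noncomputable def rkM (M : Matroid α) : ℕ := rk M M.E

/-- The modular defect of a pair of sets:
`r(X) + r(Y) - r(X ∪ Y) - r(X ∩ Y)` (a natural number). -/
noncomputable def pairDefect (M : Matroid α) (X Y : Set α) : ℕ :=
  rk M X + rk M Y - rk M (X ∪ Y) - rk M (X ∩ Y)

/-- A pair of sets is a modular pair if its modular defect is zero. -/
def ModularPair (M : Matroid α) (X Y : Set α) : Prop := pairDefect M X Y = 0

/-- A matroid is modular if every pair of flats is a modular pair. -/
def Modular (M : Matroid α) : Prop :=
  ∀ F L : Set α, M.IsFlat F → M.IsFlat L → ModularPair M F L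

/-- A matroid (of rank at least 3) is hypermodular if every pair of flats of
rank `r(M) - 1` is a modular pair. -/
def Hypermodular (M : Matroid α) : Prop :=
  ∀ F L : Set α, M.IsFlat F → M.IsFlat L →
    rk M F + 1 = rkM M → rk M L + 1 = rkM M → ModularPair M F L

/-- A modular cut of `M`: a collection of flats that is upward closed and
closed under intersections of modular pairs. -/
def ModularCut (M : Matroid α) (𝓜 : Set (Set α)) : Prop :=
  (∀ F ∈ 𝓜, M.IsFlat F) ∧
  (∀ L ∈ 𝓜, ∀ F : Set α, M.IsFlat F → L ⊆ F → F ∈ 𝓜) ∧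
  (∀ F ∈ 𝓜, ∀ L ∈ 𝓜, ModularPair M F L → F ∩ L ∈ 𝓜)

/-- A principal modular cut: the collection of all flats containing some fixed flat. -/
def PrincipalCut (M : Matroid α) (𝓜 : Set (Set α)) : Prop :=
  ∃ F : Set α, M.IsFlat F ∧ 𝓜 = {L | M.IsFlat L ∧ F ⊆ L}

/-- The modular cut generated by a collection `S` of flats:
the smallest modular cut containing `S`. -/
def genCut (M : Matroid α) (S : Set (Set α)) : Set (Set α) :=
  ⋂₀ {𝓜 | ModularCut M 𝓜 ∧ S ⊆ 𝓜}

/-- A Vámos line arrangement in a rank-4 matroid: four pairwise disjoint rank-2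
flats, the union of any three of which has rank 4, with `r(T₀ ∪ T₁) = 3`,
`r(Tᵢ ∪ Lⱼ) = 3` for all `i, j`, and `r(L₀ ∪ L₁) = 4`. -/
def VamosQuad (M : Matroid α) (T₀ T₁ L₀ L₁ : Set α) : Prop :=
  M.IsFlat T₀ ∧ M.IsFlat T₁ ∧ M.IsFlat L₀ ∧ M.IsFlat L₁ ∧
  rk M T₀ = 2 ∧ rk M T₁ = 2 ∧ rk M L₀ = 2 ∧ rk M L₁ = 2 ∧
  Disjoint T₀ T₁ ∧ Disjoint T₀ L₀ ∧ Disjoint T₀ L₁ ∧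
  Disjoint T₁ L₀ ∧ Disjoint T₁ L₁ ∧ Disjoint L₀ L₁ ∧
  rk M (T₀ ∪ T₁ ∪ L₀) = 4 ∧ rk M (T₀ ∪ T₁ ∪ L₁) = 4 ∧
  rk M (T₀ ∪ L₀ ∪ L₁) = 4 ∧ rk M (T₁ ∪ L₀ ∪ L₁) = 4 ∧
  rk M (T₀ ∪ T₁) = 3 ∧
  rk M (T₀ ∪ L₀) = 3 ∧ rk M (T₀ ∪ L₁) = 3 ∧
  rk M (T₁ ∪ L₀) = 3 ∧ rk M (T₁ ∪ L₁) = 3 ∧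
  rk M (L₀ ∪ L₁) = 4

/-- The modular defect of a matroid: the sum of the modular defects of all
unordered pairs of flats (the sum over ordered pairs is twice this). -/
noncomputable def matroidDefect (M : Matroid α) : ℕ :=
  (∑ᶠ F ∈ {F | M.IsFlat F}, ∑ᶠ L ∈ {L | M.IsFlat L}, pairDefect M F L) / 2


section RankLemmas

variable {M : Matroid α} {X Y I J F L : Set α} {x : α}

lemma indep_ncard_le (hfin : M.E.Finite) (hI : M.IsBasis' I X) (hJ : M.Indep J) (hJX : J ⊆ X) :
    J.ncard ≤ I.ncard := by
  obtain ⟨J', hJ', hJJ'⟩ := hJ.subset_isBasis'_of_subset hJX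
  have h1 : J'.Finite := hfin.subset hJ'.indep.subset_ground
  have h2 : J'.ncard = I.ncard := by
    have := hJ'.encard_eq_encard hI
    simp [Set.ncard_def, this]
  exact (Set.ncard_le_ncard hJJ' h1).trans h2.le

lemma rk_eq_of_basis' (hfin : M.E.Finite) (hI : M.IsBasis' I X) : rk M X = I.ncard := by
  refine le_antisymm (csSup_le ⟨I.ncard, I, hI.indep, hI.subset, rfl⟩ ?_)
    (le_csSup ⟨I.ncard, ?_⟩ ⟨I, hI.indep, hI.subset, rfl⟩)
  · rintro n ⟨J, hJ, hJX, rfl⟩; exact indep_ncard_le hfin hI hJ hJX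
  · rintro n ⟨J, hJ, hJX, rfl⟩; exact indep_ncard_le hfin hI hJ hJX

lemma ncard_le_rk (hfin : M.E.Finite) (hJ : M.Indep J) (hJX : J ⊆ X) : J.ncard ≤ rk M X := by
  obtain ⟨I, hI⟩ := M.exists_isBasis' X
  rw [rk_eq_of_basis' hfin hI]
  exact indep_ncard_le hfin hI hJ hJX

lemma rk_mono (hfin : M.E.Finite) (hXY : X ⊆ Y) : rk M X ≤ rk M Y := by
  obtain ⟨I, hI⟩ := M.exists_isBasis' X
  rw [rk_eq_of_basis' hfin hI]
  exact ncard_le_rk hfin hI.indep (hI.subset.trans hXY)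

lemma rk_le_rkM (hfin : M.E.Finite) (X : Set α) : rk M X ≤ rkM M := by
  obtain ⟨I, hI⟩ := M.exists_isBasis' X
  rw [rk_eq_of_basis' hfin hI]
  exact ncard_le_rk hfin hI.indep hI.indep.subset_ground

lemma rk_empty (hfin : M.E.Finite) : rk M (∅ : Set α) = 0 := by
  obtain ⟨I, hI⟩ := M.exists_isBasis' (∅ : Set α)
  have hIe : I = ∅ := subset_empty_iff.mp hI.subset
  rw [rk_eq_of_basis' hfin hI, hIe, Set.ncard_empty]

lemma rk_closure_eq (hfin : M.E.Finite) : rk M (M.closure X) = rk M X := by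
  obtain ⟨I, hI⟩ := M.exists_isBasis' X
  rw [rk_eq_of_basis' hfin hI, rk_eq_of_basis' hfin hI.isBasis_closure_right.isBasis']

lemma rk_le_of_subset_closure (hfin : M.E.Finite) (h : X ⊆ M.closure Y) :
    rk M X ≤ rk M Y := by
  calc rk M X ≤ rk M (M.closure Y) := rk_mono hfin h
  _ = rk M Y := rk_closure_eq hfin

lemma rk_submod (hfin : M.E.Finite) (hX : X ⊆ M.E) (hY : Y ⊆ M.E) :
    rk M (X ∪ Y) + rk M (X ∩ Y) ≤ rk M X + rk M Y := by
  obtain ⟨J, I, hJ, hI, hJI⟩ :=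
    M.exists_isBasis_subset_isBasis (inter_subset_left.trans subset_union_left) (union_subset hX hY)
  rw [rk_eq_of_basis' hfin hI.isBasis', rk_eq_of_basis' hfin hJ.isBasis']
  have hIfin : I.Finite := hfin.subset hI.indep.subset_ground
  have h1 : (I ∩ X).ncard ≤ rk M X :=
    ncard_le_rk hfin (hI.indep.subset inter_subset_left) inter_subset_right
  have h2 : (I ∩ Y).ncard ≤ rk M Y :=
    ncard_le_rk hfin (hI.indep.subset inter_subset_left) inter_subset_right
  have hu : (I ∩ X) ∪ (I ∩ Y) = I := by
    rw [← inter_union_distrib_left]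
    exact inter_eq_self_of_subset_left hI.subset
  have hn : (I ∩ X) ∩ (I ∩ Y) = I ∩ (X ∩ Y) := by ext y; simp; tauto
  have hJsub : J ⊆ I ∩ (X ∩ Y) := subset_inter hJI hJ.subset
  have hcard : (I ∩ X).ncard + (I ∩ Y).ncard = I.ncard + (I ∩ (X ∩ Y)).ncard := by
    rw [← Set.ncard_union_add_ncard_inter _ _ (hIfin.subset inter_subset_left)
      (hIfin.subset inter_subset_left), hu, hn]
  have hJc : J.ncard ≤ (I ∩ (X ∩ Y)).ncard :=
    Set.ncard_le_ncard hJsub (hIfin.subset inter_subset_left)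
  omega

lemma rk_insert_le (hfin : M.E.Finite) : rk M (insert x X) ≤ rk M X + 1 := by
  obtain ⟨I, hI⟩ := M.exists_isBasis' X
  obtain ⟨J, hJ, hIJ⟩ := hI.indep.subset_isBasis'_of_subset (hI.subset.trans (subset_insert x X))
  have hJsub : J ⊆ insert x I := by
    intro y hy
    rcases hJ.subset hy with rfl | hyX
    · exact mem_insert _ _
    · by_contra hy'
      have hyI : y ∉ I := fun h => hy' (mem_insert_of_mem _ h)
      exact hI.insert_not_indep ⟨hyX, hyI⟩
        (hJ.indep.subset (insert_subset hy hIJ))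
  rw [rk_eq_of_basis' hfin hJ, rk_eq_of_basis' hfin hI]
  calc J.ncard ≤ (insert x I).ncard :=
        Set.ncard_le_ncard hJsub ((hfin.subset hI.indep.subset_ground).insert x)
    _ ≤ I.ncard + 1 := Set.ncard_insert_le x I

lemma rk_insert_of_not_mem_closure (hfin : M.E.Finite) (hx : x ∈ M.E)
    (hxX : x ∉ M.closure X) : rk M (insert x X) = rk M X + 1 := by
  obtain ⟨I, hI⟩ := M.exists_isBasis' X
  have hxI : x ∉ M.closure I := by rwa [hI.closure_eq_closure]
  have hxnotI : x ∉ I := fun h => hxI (M.mem_closure_of_mem' h hx)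
  have hind : M.Indep (insert x I) := by
    rw [Matroid.insert_indep_iff]
    exact ⟨hI.indep, fun _ => ⟨hx, hxI⟩⟩
  refine le_antisymm (rk_insert_le hfin) ?_
  have hc : (insert x I).ncard = I.ncard + 1 :=
    Set.ncard_insert_of_notMem hxnotI (hfin.subset hI.indep.subset_ground)
  rw [rk_eq_of_basis' hfin hI, ← hc]
  exact ncard_le_rk hfin hind (insert_subset_insert hI.subset)

lemma eq_empty_of_rk_zero (hfin : M.E.Finite) (hloop : M.closure ∅ = ∅)
    (hX : X ⊆ M.E) (h : rk M X = 0) : X = ∅ := by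
  obtain ⟨I, hI⟩ := M.exists_isBasis' X
  have hIfin : I.Finite := hfin.subset hI.indep.subset_ground
  have h0 : I.ncard = 0 := by rw [← rk_eq_of_basis' hfin hI, h]
  have hIe : I = ∅ := (Set.ncard_eq_zero hIfin).mp h0
  have h2 := (hI.isBasis hX).subset_closure
  rw [hIe, hloop] at h2
  exact subset_empty_iff.mp h2

lemma one_le_rk (hfin : M.E.Finite) (hloop : M.closure ∅ = ∅)
    (hX : X ⊆ M.E) (hne : X.Nonempty) : 1 ≤ rk M X := by
  by_contra h
  push_neg at h
  rw [Nat.lt_one_iff] at h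
  rw [eq_empty_of_rk_zero hfin hloop hX h] at hne
  exact hne.ne_empty rfl

lemma subset_closure_of_rk_le (hfin : M.E.Finite) (hXY : X ⊆ Y) (hY : Y ⊆ M.E)
    (h : rk M Y ≤ rk M X) : Y ⊆ M.closure X := by
  obtain ⟨I, J, hI, hJ, hIJ⟩ := M.exists_isBasis_subset_isBasis hXY hY
  have hJfin : J.Finite := hfin.subset hJ.indep.subset_ground
  have hIJ' : I = J := by
    refine Set.eq_of_subset_of_ncard_le hIJ ?_ hJfin
    rw [← rk_eq_of_basis' hfin hJ.isBasis', ← rk_eq_of_basis' hfin hI.isBasis']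
    exact h
  have h2 := hJ.subset_closure
  rw [← hIJ'] at h2
  exact h2.trans (M.closure_subset_closure hI.subset)

lemma flat_eq_ground_of_rk (hfin : M.E.Finite) (hF : M.IsFlat F) (h : rkM M ≤ rk M F) :
    F = M.E := by
  refine subset_antisymm hF.subset_ground ?_
  have h2 := subset_closure_of_rk_le hfin hF.subset_ground Subset.rfl h
  rwa [hF.closure] at h2

end RankLemmas

/-- Let M be a finite loopless rank-4 hypermodular matroid and
F, L flats with r(F) ≥ r(L). Then {F, L} is non-modular iff F ∩ L = ∅ and either
(r(F) = 3 and r(L) = 2) or (r(F) = r(L) = 2 and r(F ∪ L) = 3). -/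
theorem statement_14 {α : Type*} (M : Matroid α) (hfin : M.E.Finite)
    (hrk : rkM M = 4) (hloopless : M.closure ∅ = ∅) (hhm : Hypermodular M)
    (F L : Set α) (hF : M.IsFlat F) (hL : M.IsFlat L) (hge : rk M L ≤ rk M F) :
    ¬ ModularPair M F L ↔
      (F ∩ L = ∅ ∧ ((rk M F = 3 ∧ rk M L = 2) ∨
        (rk M F = 2 ∧ rk M L = 2 ∧ rk M (F ∪ L) = 3))) := by
  have hFE := hF.subset_ground
  have hLE := hL.subset_ground
  have hsub : rk M (F ∪ L) + rk M (F ∩ L) ≤ rk M F + rk M L :=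
    rk_submod hfin hFE hLE
  have hiL : rk M (F ∩ L) ≤ rk M L := rk_mono hfin inter_subset_right
  have hFu : rk M F ≤ rk M (F ∪ L) := rk_mono hfin subset_union_left
  have hu4 : rk M (F ∪ L) ≤ 4 := by rw [← hrk]; exact rk_le_rkM hfin _
  have hMP : ModularPair M F L ↔ rk M F + rk M L = rk M (F ∪ L) + rk M (F ∩ L) := by
    unfold ModularPair pairDefect
    omega
  rw [hMP]
  -- key sublemma : if some x ∈ L \ F then rk (F ∪ L) ≥ rk F + 1
  have hxlem : ∀ x ∈ L, x ∉ F → rk M F + 1 ≤ rk M (F ∪ L) := by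
    intro x hxL hxF
    have h1 : rk M (insert x F) = rk M F + 1 :=
      rk_insert_of_not_mem_closure hfin (hLE hxL) (by rwa [hF.closure])
    rw [← h1]
    exact rk_mono hfin (insert_subset (Or.inr hxL) subset_union_left)
  constructor
  · intro hne
    have hlt : rk M (F ∪ L) + rk M (F ∩ L) < rk M F + rk M L := by omega
    -- L is not contained in F
    have hLF : ¬ L ⊆ F := by
      intro hLF
      have h1 : F ∪ L = F := union_eq_self_of_subset_right hLF
      have h2 : F ∩ L = L := inter_eq_self_of_subset_right hLF
      rw [h1, h2] at hlt
      omega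
    obtain ⟨x, hxL, hxF⟩ := not_subset.mp hLF
    -- rk L ≥ 1
    have hb0 : rk M L ≠ 0 := by
      intro h0
      rw [eq_empty_of_rk_zero hfin hloopless hLE h0] at hxL
      exact hxL
    -- rk L ≥ 2
    have hb1 : rk M L ≠ 1 := by
      intro h1
      by_cases hFL : F ∩ L = ∅
      · have hi0 : rk M (F ∩ L) = 0 := by rw [hFL]; exact rk_empty hfin
        have hrx : rk M {x} = 1 := by
          refine le_antisymm ?_ (one_le_rk hfin hloopless (singleton_subset_iff.mpr (hLE hxL))
            (singleton_nonempty x))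
          have := rk_mono hfin (M := M) (singleton_subset_iff.mpr hxL)
          omega
        have hLcl : L ⊆ M.closure {x} :=
          subset_closure_of_rk_le hfin (singleton_subset_iff.mpr hxL) hLE (by omega)
        have hule : rk M (F ∪ L) ≤ rk M F + 1 := by
          have hsub2 : F ∪ L ⊆ M.closure (insert x F) := by
            refine union_subset ?_
              (hLcl.trans (M.closure_subset_closure (singleton_subset_iff.mpr (mem_insert x F))))
            exact (M.subset_closure_of_subset (subset_insert x F)
              (insert_subset (hLE hxL) hFE))
          have := rk_le_of_subset_closure hfin hsub2
          have := rk_insert_le (M := M) (x := x) (X := F) hfin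
          omega
        have := hxlem x hxL hxF
        omega
      · have hi1 : 1 ≤ rk M (F ∩ L) :=
          one_le_rk hfin hloopless (inter_subset_left.trans hFE)
            (nonempty_iff_ne_empty.mpr hFL)
        have hLcl : L ⊆ M.closure (F ∩ L) :=
          subset_closure_of_rk_le hfin inter_subset_right hLE (by omega)
        have : L ⊆ F := by
          have h2 := M.closure_subset_closure (inter_subset_left (s := F) (t := L))
          rw [hF.closure] at h2
          exact hLcl.trans h2
        exact hxF (this hxL)
    have hb2 : 2 ≤ rk M L := by omega
    -- rk F ≤ 3
    have ha3 : rk M F ≤ 3 := by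
      by_contra h
      push_neg at h
      have : F = M.E := flat_eq_ground_of_rk hfin hF (by omega)
      exact hxF (this ▸ hLE hxL)
    -- not both rank 3 (hypermodularity)
    have hnot33 : ¬ (rk M F = 3 ∧ rk M L = 3) := by
      rintro ⟨haf, hbf⟩
      have := hhm F L hF hL (by omega) (by omega)
      rw [hMP] at this
      omega
    have hux := hxlem x hxL hxF
    rcases Nat.lt_or_ge (rk M F) 3 with haF | haF
    · -- rk F = 2, rk L = 2
      have ha2 : rk M F = 2 := by omega
      have hb2' : rk M L = 2 := by omega
      by_cases hFL : F ∩ L = ∅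
      · have hi0 : rk M (F ∩ L) = 0 := by rw [hFL]; exact rk_empty hfin
        exact ⟨hFL, Or.inr ⟨ha2, hb2', by omega⟩⟩
      · exfalso
        have hi1 : 1 ≤ rk M (F ∩ L) :=
          one_le_rk hfin hloopless (inter_subset_left.trans hFE)
            (nonempty_iff_ne_empty.mpr hFL)
        have hi1' : rk M (F ∩ L) = 1 := by
          by_contra h2
          have : rk M L ≤ rk M (F ∩ L) := by omega
          have hLcl : L ⊆ M.closure (F ∩ L) :=
            subset_closure_of_rk_le hfin inter_subset_right hLE this
          have h3 := M.closure_subset_closure (inter_subset_left (s := F) (t := L))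
          rw [hF.closure] at h3
          exact hxF ((hLcl.trans h3) hxL)
        omega
    · -- rk F = 3, rk L = 2
      have ha3' : rk M F = 3 := by omega
      have hb2' : rk M L = 2 := by omega
      have hu : rk M (F ∪ L) = 4 := by omega
      have hi0 : rk M (F ∩ L) = 0 := by omega
      exact ⟨eq_empty_of_rk_zero hfin hloopless (inter_subset_left.trans hFE) hi0,
        Or.inl ⟨ha3', hb2'⟩⟩
  · rintro ⟨hFL, hcase⟩
    have hi0 : rk M (F ∩ L) = 0 := by rw [hFL]; exact rk_empty hfin
    rcases hcase with ⟨ha, hb⟩ | ⟨ha, hb, hu⟩ <;> omega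

end SMC
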